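/- In the worst case, the order-3 Voronoi diagram of n multiplicatively weighted sites in 2-dimensional Euclidean space has Ω(n²) non-empty regions; i.e., for infinitely many n there exist n sites in ℝ² with positive multiplicative weights whose weighted order-3 Voronoi diagram has Ω(n²) non-empty regions. -/

import Mathlib

noncomputable def vpt (a b : ℝ) : EuclideanSpace ℝ (Fin 2) := !₂[a, b]

lemma dist_vpt (a b c d : ℝ) :
    dist (vpt a b) (vpt c d) = Real.sqrt ((a - c) ^ 2 + (b - d) ^ 2) := by
  rw [vpt, vpt, EuclideanSpace.dist_eq]
  simp [Fin.sum_univ_two, Real.dist_eq, sq_abs]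

lemma one_le_sq_sub {a b : ℕ} (h : a ≠ b) : (1 : ℝ) ≤ ((a : ℝ) - (b : ℝ)) ^ 2 := by
  have h1 : ((a : ℤ) - b) ≠ 0 := by omega
  have h2 : (1 : ℤ) ≤ ((a : ℤ) - b) ^ 2 := by
    have := Int.one_le_abs h1
    nlinarith [sq_abs ((a : ℤ) - b)]
  exact_mod_cast h2

lemma sqrt_le_of_sq {a b : ℝ} (hb : 0 ≤ b) (h : a ≤ b ^ 2) : Real.sqrt a ≤ b := by
  calc Real.sqrt a ≤ Real.sqrt (b ^ 2) := Real.sqrt_le_sqrt h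
  _ = b := Real.sqrt_sq hb

lemma keyA3 {M : ℝ} (hM : 25 ≤ M) :
    (1 + M) ^ 2 * (M ^ 5 + M * (M + 1)) ^ 2 <
      ((M + 1) ^ 2 + 4) * (M ^ 5 + (M + 1)) ^ 2 := by
  nlinarith [sq_nonneg M, sq_nonneg (M - 25), pow_pos (by linarith : (0:ℝ) < M) 5,
    pow_pos (by linarith : (0:ℝ) < M) 9, pow_pos (by linarith : (0:ℝ) < M) 10,
    mul_pos (pow_pos (by linarith : (0:ℝ) < M) 9) (by linarith : (0:ℝ) < M - 24)]

lemma master {M I J K : ℝ} (hM : 25 ≤ M)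
    (hI : 1 ≤ I) (hI' : I ≤ M) (hJ : 1 ≤ J) (hJ' : J ≤ M)
    (hK : 1 ≤ K) (hK' : K ≤ M) (hIK : 1 ≤ (I - K) ^ 2) :
    ((1 + M) / (M ^ 5 + K * (M + 1)) * (M ^ 5 + I * (M + 1))) ^ 2 <
      (K * (M + 1) - I * (M + 1)) ^ 2 + (J + 1) ^ 2 := by
  set E : ℝ := M ^ 5 with hE
  set H : ℝ := M + 1 with hH
  have hE0 : 0 < E := pow_pos (by linarith) 5
  have hH0 : 0 < H := by rw [hH]; linarith
  have hdK : 0 < E + K * H := by nlinarith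
  have hdI : 0 < E + I * H := by nlinarith
  rw [div_mul_eq_mul_div, div_pow, div_lt_iff₀ (by positivity)]
  have A1 : (1 + M) ^ 2 * (E + I * H) ^ 2 ≤ (1 + M) ^ 2 * (E + M * H) ^ 2 := by
    have h0 : E + I * H ≤ E + M * H := by nlinarith
    have := pow_le_pow_left₀ hdI.le h0 2
    nlinarith [sq_nonneg (1 + M)]
  have A3 : (1 + M) ^ 2 * (E + M * H) ^ 2 < (H ^ 2 + 4) * (E + H) ^ 2 := by
    have := keyA3 hM
    rw [hE, hH]; nlinarith [this]
  have A2 : (H ^ 2 + 4) * (E + H) ^ 2 ≤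
      ((K * H - I * H) ^ 2 + (J + 1) ^ 2) * (E + K * H) ^ 2 := by
    have h1 : H ^ 2 + 4 ≤ (K * H - I * H) ^ 2 + (J + 1) ^ 2 := by
      have : (K * H - I * H) ^ 2 = (I - K) ^ 2 * H ^ 2 := by ring
      nlinarith [sq_nonneg H]
    have h2 : (E + H) ^ 2 ≤ (E + K * H) ^ 2 := by
      have h0 : E + H ≤ E + K * H := by nlinarith
      exact pow_le_pow_left₀ (by positivity) h0 2
    have h3 : (0:ℝ) ≤ H ^ 2 + 4 := by positivity
    exact mul_le_mul h1 h2 (sq_nonneg _) (by nlinarith [sq_nonneg (J+1), sq_nonneg (K*H - I*H)])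
  calc ((1 + M) * (E + I * H)) ^ 2 = (1 + M) ^ 2 * (E + I * H) ^ 2 := by ring
  _ ≤ (1 + M) ^ 2 * (E + M * H) ^ 2 := A1
  _ < (H ^ 2 + 4) * (E + H) ^ 2 := A3
  _ ≤ _ := A2

/-- index of the "pair" a site belongs to -/
def pairIdx (m : ℕ) (t : Fin (3 * m)) : ℕ :=
  if t.val < 2 * m then t.val - m else t.val - 2 * m

noncomputable def sites (m : ℕ) (t : Fin (3 * m)) : EuclideanSpace ℝ (Fin 2) :=
  if t.val < m then vpt (-(m : ℝ) ^ 5) ((t.val : ℝ) + 1)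
  else vpt (((pairIdx m t : ℝ) + 1) * ((m : ℝ) + 1)) (-1)

noncomputable def wts (m : ℕ) (t : Fin (3 * m)) : ℝ :=
  if t.val < m then 1
  else ((1 + (m : ℝ)) / ((m : ℝ) ^ 5 + ((pairIdx m t : ℝ) + 1) * ((m : ℝ) + 1))) ^ 2

def tri (m : ℕ) (i j : Fin m) : Finset (Fin (3 * m)) :=
  { ⟨j.val, by have := j.isLt; omega⟩,
    ⟨m + i.val, by have := i.isLt; omega⟩,
    ⟨2 * m + i.val, by have := i.isLt; omega⟩ }

lemma tri_mem (m : ℕ) (hm : 25 ≤ m) (i j : Fin m) :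
    (tri m i j).card = 3 ∧
      ∃ (x : EuclideanSpace ℝ (Fin 2)) (r : ℝ),
        (∀ t ∈ tri m i j, dist (sites m t) x ≤ Real.sqrt (wts m t) * r) ∧
        ∀ t ∉ tri m i j, Real.sqrt (wts m t) * r < dist (sites m t) x := by
  have i2 := i.isLt
  have j2 := j.isLt
  set M : ℝ := (m : ℝ) with hMdef
  have hM : (25 : ℝ) ≤ M := by rw [hMdef]; exact_mod_cast hm
  set I : ℝ := (i.val : ℝ) + 1 with hIdef
  set J : ℝ := (j.val : ℝ) + 1 with hJdef
  have hI1 : 1 ≤ I := by have : (0:ℝ) ≤ (i.val : ℝ) := Nat.cast_nonneg _; linarith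
  have hIM : I ≤ M := by
    have : (i.val : ℝ) + 1 ≤ (m : ℝ) := by exact_mod_cast Nat.succ_le_of_lt i2
    linarith
  have hJ1 : 1 ≤ J := by have : (0:ℝ) ≤ (j.val : ℝ) := Nat.cast_nonneg _; linarith
  have hJM : J ≤ M := by
    have : (j.val : ℝ) + 1 ≤ (m : ℝ) := by exact_mod_cast Nat.succ_le_of_lt j2
    linarith
  set r : ℝ := M ^ 5 + I * (M + 1) with hrdef
  have hr0 : 0 < r := by
    have : (0:ℝ) < M ^ 5 := by positivity
    nlinarith
  constructor
  · rw [tri]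
    rw [Finset.card_insert_of_notMem (by simp [Fin.ext_iff]; omega),
        Finset.card_insert_of_notMem (by simp [Fin.ext_iff]; omega),
        Finset.card_singleton]
  refine ⟨vpt (I * (M + 1)) J, r, ?_, ?_⟩
  · -- insiders
    intro t ht
    simp only [tri, Finset.mem_insert, Finset.mem_singleton] at ht
    rcases ht with ht | ht | ht <;> subst ht
    · -- heavy site j
      have hs : sites m ⟨j.val, by omega⟩ = vpt (-M ^ 5) J := by
        simp [sites, j2, hJdef, hMdef]
      have hw : wts m ⟨j.val, by omega⟩ = 1 := by simp [wts, j2]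
      rw [hs, hw, Real.sqrt_one, one_mul, dist_vpt]
      apply sqrt_le_of_sq hr0.le
      apply le_of_eq; rw [hrdef]; ring
    · -- pair site, first copy
      have hcond : ¬ (m + i.val < m) := by omega
      have hcond2 : m + i.val < 2 * m := by omega
      have hpi : pairIdx m ⟨m + i.val, by omega⟩ = i.val := by
        simp [pairIdx, hcond2]
      have hs : sites m ⟨m + i.val, by omega⟩ = vpt (I * (M + 1)) (-1) := by
        simp [sites, hcond, hpi, hIdef, hMdef]
      have hw : wts m ⟨m + i.val, by omega⟩ = ((1 + M) / r) ^ 2 := by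
        simp [wts, hcond, hpi, hIdef, hrdef, hMdef]
      rw [hs, hw, Real.sqrt_sq (by positivity), div_mul_cancel₀ _ (ne_of_gt hr0), dist_vpt]
      apply sqrt_le_of_sq (by linarith)
      nlinarith [sq_nonneg (I * (M+1) - I * (M+1))]
    · -- pair site, second copy
      have hcond : ¬ (2 * m + i.val < m) := by omega
      have hcond2 : ¬ (2 * m + i.val < 2 * m) := by omega
      have hpi : pairIdx m ⟨2 * m + i.val, by omega⟩ = i.val := by
        simp [pairIdx, hcond2]
      have hs : sites m ⟨2 * m + i.val, by omega⟩ = vpt (I * (M + 1)) (-1) := by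
        simp [sites, hcond, hpi, hIdef, hMdef]
      have hw : wts m ⟨2 * m + i.val, by omega⟩ = ((1 + M) / r) ^ 2 := by
        simp [wts, hcond, hpi, hIdef, hrdef, hMdef]
      rw [hs, hw, Real.sqrt_sq (by positivity), div_mul_cancel₀ _ (ne_of_gt hr0), dist_vpt]
      apply sqrt_le_of_sq (by linarith)
      nlinarith [sq_nonneg (I * (M+1) - I * (M+1))]
  · -- outsiders
    intro t ht
    simp only [tri, Finset.mem_insert, Finset.mem_singleton, Fin.ext_iff, not_or] at ht
    obtain ⟨ht1, ht2, ht3⟩ := ht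
    have t2 := t.isLt
    by_cases htm : t.val < m
    · -- heavy outsider
      have hs : sites m t = vpt (-M ^ 5) ((t.val : ℝ) + 1) := by
        simp [sites, htm, hMdef]
      have hw : wts m t = 1 := by simp [wts, htm]
      rw [hs, hw, Real.sqrt_one, one_mul, dist_vpt]
      apply Real.lt_sqrt_of_sq_lt
      have hne : (1 : ℝ) ≤ ((t.val : ℝ) - (j.val : ℝ)) ^ 2 := one_le_sq_sub ht1
      have : ((t.val : ℝ) + 1 - J) ^ 2 = ((t.val : ℝ) - (j.val : ℝ)) ^ 2 := by
        rw [hJdef]; ring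
      nlinarith [sq_nonneg (-M ^ 5 - I * (M + 1))]
    · -- pair outsider
      set k : ℕ := pairIdx m t with hkdef
      have hkm : k < m ∧ k ≠ i.val := by
        rw [hkdef, pairIdx]
        by_cases h2m : t.val < 2 * m <;> simp [h2m] <;> omega
      set K : ℝ := (k : ℝ) + 1 with hKdef
      have hK1 : 1 ≤ K := by have : (0:ℝ) ≤ (k : ℝ) := Nat.cast_nonneg _; linarith
      have hKM : K ≤ M := by
        have : (k : ℝ) + 1 ≤ (m : ℝ) := by exact_mod_cast Nat.succ_le_of_lt hkm.1
        linarith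
      have hIK : 1 ≤ (I - K) ^ 2 := by
        have hne : (1 : ℝ) ≤ ((i.val : ℝ) - (k : ℝ)) ^ 2 := one_le_sq_sub (Ne.symm hkm.2)
        have : (I - K) ^ 2 = ((i.val : ℝ) - (k : ℝ)) ^ 2 := by rw [hIdef, hKdef]; ring
        linarith [this ▸ hne]
      have hs : sites m t = vpt (K * (M + 1)) (-1) := by
        simp [sites, htm, hkdef, hKdef, hMdef]
      have hw : wts m t = ((1 + M) / (M ^ 5 + K * (M + 1))) ^ 2 := by
        simp [wts, htm, hkdef, hKdef, hMdef]
      have hdK : (0:ℝ) < M ^ 5 + K * (M + 1) := by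
        have : (0:ℝ) < M ^ 5 := by positivity
        nlinarith
      rw [hs, hw, Real.sqrt_sq (by positivity), dist_vpt]
      apply Real.lt_sqrt_of_sq_lt
      have hmas := master hM hI1 hIM hJ1 hJM hK1 hKM hIK
      calc ((1 + M) / (M ^ 5 + K * (M + 1)) * r) ^ 2
          = ((1 + M) / (M ^ 5 + K * (M + 1)) * (M ^ 5 + I * (M + 1))) ^ 2 := by
            rw [hrdef]
        _ < (K * (M + 1) - I * (M + 1)) ^ 2 + (J + 1) ^ 2 := hmas
        _ = (K * (M + 1) - I * (M + 1)) ^ 2 + (-1 - J) ^ 2 := by ring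

theorem weighted_order_three_voronoi_quadratic_lower_bound :
    ∃ c > (0 : ℝ), ∀ N : ℕ, ∃ n : ℕ, N ≤ n ∧
      ∃ (s : Fin n → EuclideanSpace ℝ (Fin 2)) (w : Fin n → ℝ),
        (∀ i, 0 < w i) ∧
        c * (n : ℝ) ^ 2 ≤
          ({A : Finset (Fin n) | A.card = 3 ∧
              ∃ (x : EuclideanSpace ℝ (Fin 2)) (r : ℝ),
                (∀ i ∈ A, dist (s i) x ≤ Real.sqrt (w i) * r) ∧
                ∀ i ∉ A, Real.sqrt (w i) * r < dist (s i) x}.ncard : ℝ) := by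
  refine ⟨1 / 9, by norm_num, fun N => ?_⟩
  set m : ℕ := max N 25 with hmdef
  have hm25 : 25 ≤ m := le_max_right N 25
  have hmN : N ≤ m := le_max_left N 25
  refine ⟨3 * m, by omega, sites m, wts m, ?_, ?_⟩
  · -- positivity of weights
    intro t
    by_cases htm : t.val < m
    · simp [wts, htm]
    · have h1 : (0:ℝ) < 1 + (m : ℝ) := by positivity
      have h2 : (0:ℝ) < (m : ℝ) ^ 5 + ((pairIdx m t : ℝ) + 1) * ((m : ℝ) + 1) := by
        have hm0 : (0:ℝ) < (m:ℝ) := by exact_mod_cast (by omega : 0 < m)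
        have h3 : (0:ℝ) ≤ (pairIdx m t : ℝ) := Nat.cast_nonneg _
        nlinarith [pow_pos hm0 5]
      simp only [wts, htm, if_false]
      exact pow_pos (div_pos h1 h2) 2
  · -- counting
    set S : Set (Finset (Fin (3 * m))) :=
      {A : Finset (Fin (3 * m)) | A.card = 3 ∧
        ∃ (x : EuclideanSpace ℝ (Fin 2)) (r : ℝ),
          (∀ t ∈ A, dist (sites m t) x ≤ Real.sqrt (wts m t) * r) ∧
          ∀ t ∉ A, Real.sqrt (wts m t) * r < dist (sites m t) x} with hSdef
    have hmem : ∀ p : Fin m × Fin m, tri m p.1 p.2 ∈ S := by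
      intro p
      exact tri_mem m hm25 p.1 p.2
    have hinj : Function.Injective (fun p : Fin m × Fin m => tri m p.1 p.2) := by
      intro p q h
      have hp1 := p.1.isLt; have hp2 := p.2.isLt
      have hq1 := q.1.isLt; have hq2 := q.2.isLt
      simp only at h
      have e1 : (⟨p.2.val, by omega⟩ : Fin (3 * m)) ∈ tri m q.1 q.2 := by
        rw [← h, tri]; exact Finset.mem_insert_self _ _
      have e2 : (⟨m + p.1.val, by omega⟩ : Fin (3 * m)) ∈ tri m q.1 q.2 := by
        rw [← h, tri]
        exact Finset.mem_insert_of_mem (Finset.mem_insert_self _ _)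
      simp only [tri, Finset.mem_insert, Finset.mem_singleton, Fin.ext_iff] at e1 e2
      have hv1 : p.2.val = q.2.val := by omega
      have hv2 : p.1.val = q.1.val := by omega
      exact Prod.ext (Fin.ext hv2) (Fin.ext hv1)
    have hsub : Set.range (fun p : Fin m × Fin m => tri m p.1 p.2) ⊆ S := by
      rintro _ ⟨p, rfl⟩; exact hmem p
    have hcard : (Set.range (fun p : Fin m × Fin m => tri m p.1 p.2)).ncard = m * m := by
      rw [← Set.image_univ, Set.ncard_image_of_injective _ hinj, Set.ncard_univ]
      simp [Nat.card_eq_fintype_card]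
    have hle : m * m ≤ S.ncard := by
      rw [← hcard]
      exact Set.ncard_le_ncard hsub (Set.toFinite S)
    have hle' : ((m : ℝ) * m) ≤ (S.ncard : ℝ) := by exact_mod_cast hle
    have : (1 / 9 : ℝ) * ((3 * m : ℕ) : ℝ) ^ 2 = (m : ℝ) * m := by
      push_cast; ring
    rw [this]
    exact hle'
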